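/- Let A = {a_1,...,a_n} with uniform distribution U, and let P be a distribution on A sorted so that P(a_1) ≥ P(a_2) ≥ ... ≥ P(a_n), with |{a : P(a) > 1/n}| ≥ 2. Define P* by P*(a_1) = P(a_1) + (P(a_2) − 1/n), P*(a_2) = 1/n, and P*(a_i) = P(a_i) for i ≥ 3. Then P* is a probability distribution, Δ(P*,U) = Δ(P,U), and the number of elements with P*-probability strictly greater than 1/n is strictly smaller than for P. -/
import Mathlib


open Finset in
/-- Let `P` be a distribution on `{a_1,…,a_n}` sorted in
decreasing order with at least two elements above the uniform level `1/n`.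
The transformation `T₊` producing `P*` with `P*(a_1) = P(a_1) + (P(a_2) − 1/n)`,
`P*(a_2) = 1/n`, `P*(a_i) = P(a_i)` otherwise, yields a probability
distribution with the same statistical distance to uniform and strictly fewer
elements above `1/n`. -/
theorem stmt_14 (n : ℕ) (hn : 2 ≤ n)
    (P : Fin n → ℝ) (hP0 : ∀ i, 0 ≤ P i) (hP1 : (∑ i, P i) = 1)
    (hsorted : ∀ i j : Fin n, i ≤ j → P j ≤ P i)
    (hplus : 2 ≤ (univ.filter fun i => 1 / (n : ℝ) < P i).card)
    (Pstar : Fin n → ℝ)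
    (hPstar : ∀ i : Fin n,
      Pstar i =
        if i.val = 0 then P ⟨0, by omega⟩ + (P ⟨1, by omega⟩ - 1 / n)
        else if i.val = 1 then 1 / n
        else P i) :
    (∀ i, 0 ≤ Pstar i) ∧ (∑ i, Pstar i) = 1 ∧
    (1 / 2) * ∑ i, |Pstar i - 1 / n| = (1 / 2) * ∑ i, |P i - 1 / n| ∧
    (univ.filter fun i => 1 / (n : ℝ) < Pstar i).card
      < (univ.filter fun i => 1 / (n : ℝ) < P i).card := by
  have hn0 : (0:ℝ) < n := by positivity
  set i0 : Fin n := ⟨0, by omega⟩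
  set i1 : Fin n := ⟨1, by omega⟩
  have hne : i0 ≠ i1 := by simp [i0, i1, Fin.ext_iff]
  -- P i1 > 1/n
  have h1 : 1 / (n:ℝ) < P i1 := by
    by_contra h
    push_neg at h
    have hsub : (univ.filter fun i => 1 / (n : ℝ) < P i) ⊆ {i0} := by
      intro i hi
      simp only [mem_filter] at hi
      simp only [mem_singleton]
      by_contra hne'
      have : i1 ≤ i := by
        have : i.val ≠ 0 := fun h => hne' (Fin.ext h)
        simp [i1, Fin.le_def]; omega
      exact absurd (le_trans (hsorted i1 i this) h) (not_le.mpr hi.2)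
    have := card_le_card hsub
    rw [card_singleton] at this
    omega
  have h0 : 1 / (n:ℝ) < P i0 := lt_of_lt_of_le h1 (hsorted i0 i1 (by simp [i0, i1, Fin.le_def]))
  have hv0 : Pstar i0 = P i0 + (P i1 - 1 / n) := by rw [hPstar i0]; simp [i0, i1]
  have hv1 : Pstar i1 = 1 / n := by rw [hPstar i1]; simp [i1]
  have hvo : ∀ i : Fin n, i ≠ i0 → i ≠ i1 → Pstar i = P i := by
    intro i hi0 hi1
    rw [hPstar i]
    have h0' : i.val ≠ 0 := fun h => hi0 (Fin.ext h)
    have h1' : i.val ≠ 1 := fun h => hi1 (Fin.ext h)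
    simp [h0', h1']
  refine ⟨?_, ?_, ?_, ?_⟩
  · intro i
    by_cases e0 : i = i0
    · rw [e0, hv0]; nlinarith [hP0 i0]
    by_cases e1 : i = i1
    · rw [e1, hv1]; positivity
    · rw [hvo i e0 e1]; exact hP0 i
  · have key : ∑ i, (Pstar i - P i) = 0 := by
      rw [← Finset.sum_subset (Finset.subset_univ ({i0, i1} : Finset (Fin n)))
        (by intro i _ hi; simp only [mem_insert, mem_singleton, not_or] at hi
            rw [hvo i hi.1 hi.2]; ring)]
      rw [Finset.sum_pair hne, hv0, hv1]; ring
    have := Finset.sum_sub_distrib (f := Pstar) (g := P) (s := univ)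
    rw [this, hP1] at key
    linarith
  · have key : ∑ i, (|Pstar i - 1/n| - |P i - 1/n|) = 0 := by
      rw [← Finset.sum_subset (Finset.subset_univ ({i0, i1} : Finset (Fin n)))
        (by intro i _ hi; simp only [mem_insert, mem_singleton, not_or] at hi
            rw [hvo i hi.1 hi.2]; ring)]
      rw [Finset.sum_pair hne, hv0, hv1]
      rw [sub_self, abs_zero, abs_of_pos (by linarith), abs_of_pos (by linarith),
        abs_of_pos (by linarith)]
      ring
    rw [Finset.sum_sub_distrib] at key
    have : ∑ i, |Pstar i - 1/n| = ∑ i, |P i - 1/n| := by linarith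
    rw [this]
  · have hmem : i1 ∈ (univ.filter fun i => 1 / (n : ℝ) < P i) := by
      simp only [mem_filter, mem_univ, true_and]
      exact h1
    have hset : (univ.filter fun i => 1 / (n : ℝ) < Pstar i)
        = (univ.filter fun i => 1 / (n : ℝ) < P i).erase i1 := by
      ext i
      simp only [mem_erase, mem_filter, mem_univ, true_and]
      constructor
      · intro hi
        by_cases e1 : i = i1
        · rw [e1, hv1] at hi; exact absurd hi (lt_irrefl _)
        refine ⟨e1, ?_⟩
        by_cases e0 : i = i0
        · rw [e0]; exact h0
        · rwa [hvo i e0 e1] at hi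
      · rintro ⟨e1, hi⟩
        by_cases e0 : i = i0
        · rw [e0, hv0]; linarith
        · rwa [hvo i e0 e1]
    rw [hset, Finset.card_erase_of_mem hmem]
    omega
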